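/- arXiv:1502.00349 — 6 statements merged into one kernel-verified Lean document; each statement's English description precedes it below -/
import Mathlib

section
/- Let μ > 0 and let m, g : ℝ → ℝ be differentiable with m(r) > 0, μ·m(r) < 1 and m'(r)² + g'(r)² = 1 for all r (so that φ(r, θ) = (m(r)cos θ, m(r)sin θ, g(r)) is an isometric embedding of the warped surface (M, h = dr² + m²dθ²) into Euclidean ℝ³). For a point p = (x, y, z) ∈ ℝ³ with μ²(x² + y²) < 1 set λ̃(p) = 1 − μ²(x² + y²), and define the quadratic form ã_p(V) = [(1 − μ²x²)V₁² + (1 − μ²y²)V₂² − 2μ²xy·V₁V₂]/λ̃(p)² + V₃²/λ̃(p). Then for every (r, θ) and every tangent vector (u, w) ∈ ℝ², with V = Dφ(u, w) = (m'(r)cos θ·u − m(r)sin θ·w, m'(r)sin θ·u + m(r)cos θ·w, g'(r)·u), one has ã_{φ(r,θ)}(V) = u²/λ(r) + m(r)²·w²/λ(r)², where λ(r) = 1 − μ²m(r)². That is, φ pulls back the Riemannian metric ã on the cylinder 𝒰_μ = {x² + y² < 1/μ²} to the Riemannian part a of the rotational Randers metric, a₁₁ = 1/λ, a₁₂ = 0,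 a₂₂ = m²/λ². -/
/-- The embedding `φ(r, θ) = (m(r)cos θ, m(r)sin θ, g(r))` pulls back the Riemannian
part `ã` of the rotational Minkowski–Randers metric on the cylinder `𝒰_μ` to the
Riemannian part `a = diag(1/λ, m²/λ²)` of the rotational Randers metric. -/
theorem randers_embedding_riemannian_part
    (μ : ℝ) (hμ : 0 < μ) (m g m' g' : ℝ → ℝ)
    (hm : ∀ x, HasDerivAt m (m' x) x) (hg : ∀ x, HasDerivAt g (g' x) x)
    (hmpos : ∀ x, 0 < m x) (hmb : ∀ x, μ * m x < 1)
    (harc : ∀ x, (m' x) ^ 2 + (g' x) ^ 2 = 1) :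
    ∀ r θ u w : ℝ,
      let V₁ := m' r * Real.cos θ * u - m r * Real.sin θ * w
      let V₂ := m' r * Real.sin θ * u + m r * Real.cos θ * w
      let V₃ := g' r * u
      let x := m r * Real.cos θ
      let y := m r * Real.sin θ
      let lamt := 1 - μ ^ 2 * (x ^ 2 + y ^ 2)
      let lam := 1 - μ ^ 2 * (m r) ^ 2
      ((1 - μ ^ 2 * x ^ 2) * V₁ ^ 2 + (1 - μ ^ 2 * y ^ 2) * V₂ ^ 2
          - 2 * μ ^ 2 * x * y * V₁ * V₂) / lamt ^ 2 + V₃ ^ 2 / lamt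
        = u ^ 2 / lam + (m r) ^ 2 * w ^ 2 / lam ^ 2 := by
  intro r θ u w
  simp only
  have hc : Real.cos θ ^ 2 + Real.sin θ ^ 2 = 1 := Real.cos_sq_add_sin_sq θ
  have h1 := harc r
  have hl : (0:ℝ) < 1 - μ ^ 2 * (m r) ^ 2 := by nlinarith [mul_pos hμ (hmpos r), hmb r]
  have hne : (1 - μ ^ 2 * (m r) ^ 2) ≠ 0 := ne_of_gt hl
  have hlt : 1 - μ ^ 2 * ((m r * Real.cos θ) ^ 2 + (m r * Real.sin θ) ^ 2)
      = 1 - μ ^ 2 * (m r) ^ 2 := by linear_combination (-(μ ^ 2 * (m r) ^ 2)) * hc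
  rw [hlt]
  have key : (1 - μ ^ 2 * (m r * Real.cos θ) ^ 2) *
        (m' r * Real.cos θ * u - m r * Real.sin θ * w) ^ 2
      + (1 - μ ^ 2 * (m r * Real.sin θ) ^ 2) *
        (m' r * Real.sin θ * u + m r * Real.cos θ * w) ^ 2
      - 2 * μ ^ 2 * (m r * Real.cos θ) * (m r * Real.sin θ) *
        (m' r * Real.cos θ * u - m r * Real.sin θ * w) *
        (m' r * Real.sin θ * u + m r * Real.cos θ * w)
      = m' r ^ 2 * u ^ 2 * (1 - μ ^ 2 * (m r) ^ 2) + (m r) ^ 2 * w ^ 2 := by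
    linear_combination ((m' r * u) ^ 2 + (m r * w) ^ 2
      - μ ^ 2 * (m r) ^ 2 * (m' r * u) ^ 2 * (Real.cos θ ^ 2 + Real.sin θ ^ 2 + 1)) * hc
  rw [key]
  field_simp
  ring_nf
  linear_combination (u ^ 2 * (1 - μ ^ 2 * (m r) ^ 2)) * h1
end

section
/- Let m : ℝ → ℝ and μ > 0 satisfy 0 < μ·m(x) < 1 for all x, and set λ(x) = 1 − μ²m(x)². Let r, θ : I → ℝ be differentiable with r'(s)² + m(r(s))²·θ'(s)² = 1 and m(r(s))²·θ'(s) = ν (constant) for all s. Then the Finslerian momentum p₂ = (1/2)·∂F²/∂y² of the rotational Randers metric F = α + β is conserved along the twisted geodesic P(s) = (r(s), θ(s) + μs), with the conservation law p₂(s) = [m(r(s))²·(θ'(s) + μ)/λ(r(s))²] / α(P, Ṗ) − μ·m(r(s))²/λ(r(s)) = ν/(1 + μν) for all s, where α(P, Ṗ) = (1 + μν)/λ(r(s)). -/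
/-- Conservation law for the Finslerian momentum `p₂ = (1/2)∂F²/∂y² = a₂₂y²/α + b₂`
along the twisted geodesic `P(s) = (r s, θ s + μ s)` of the rotational Randers metric:
`p₂(s) = ν/(1 + μν)` for all `s`, where `α(P, Ṗ) = (1 + μν)/lam(r(s))`. -/
theorem randers_momentum_conservation
    (m : ℝ → ℝ) (μ ν : ℝ) (hμ : 0 < μ)
    (hm : ∀ x, 0 < μ * m x ∧ μ * m x < 1)
    (lam : ℝ → ℝ) (hlam : ∀ x, lam x = 1 - μ ^ 2 * (m x) ^ 2)
    (I : Set ℝ) (r θ r' θ' : ℝ → ℝ)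
    (hr : ∀ s ∈ I, HasDerivAt r (r' s) s)
    (hθ : ∀ s ∈ I, HasDerivAt θ (θ' s) s)
    (hunit : ∀ s ∈ I, (r' s) ^ 2 + (m (r s)) ^ 2 * (θ' s) ^ 2 = 1)
    (hclair : ∀ s ∈ I, (m (r s)) ^ 2 * θ' s = ν) :
    ∀ s ∈ I,
      ((m (r s)) ^ 2 * (θ' s + μ) / (lam (r s)) ^ 2) / ((1 + μ * ν) / lam (r s))
          - μ * (m (r s)) ^ 2 / lam (r s)
        = ν / (1 + μ * ν) := by
  intro s hs
  obtain ⟨hm0, hm1⟩ := hm (r s)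
  have hmum : μ ^ 2 * (m (r s)) ^ 2 < 1 := by nlinarith
  have hlam0 : lam (r s) ≠ 0 := by rw [hlam]; nlinarith
  have hmpos : 0 < m (r s) := by nlinarith
  -- |m θ'| ≤ 1 from unit speed
  have hmt : (m (r s)) ^ 2 * (θ' s) ^ 2 ≤ 1 := by nlinarith [hunit s hs, sq_nonneg (r' s)]
  have hν : ν = (m (r s)) ^ 2 * θ' s := (hclair s hs).symm
  have hμν : 1 + μ * ν > 0 := by
    have : (μ * ν) ^ 2 < 1 := by
      have h1 : (μ * ν) ^ 2 = (μ * m (r s)) ^ 2 * ((m (r s)) ^ 2 * (θ' s) ^ 2) := by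
        rw [hν]; ring
      nlinarith [sq_nonneg (m (r s) * θ' s)]
    nlinarith
  have hμν0 : 1 + μ * ν ≠ 0 := ne_of_gt hμν
  have hlam0' : 1 - μ ^ 2 * (m (r s)) ^ 2 ≠ 0 := by nlinarith
  subst hν
  rw [hlam]
  field_simp
  have e1 : (1 + m (r s) ^ 2 * θ' s * μ) ≠ 0 := by intro h; apply hμν0; linarith
  have e2 : (1 - m (r s) ^ 2 * μ ^ 2) ≠ 0 := by intro h; apply hlam0'; linarith
  field_simp
  linear_combination μ * (mul_inv_cancel₀ e1)
end

section
/- (First Finslerian Clairaut relation.) Let m : ℝ → ℝ with 0 < m(x) < 1/μ for all x and μ > 0. Let r, θ : I → ℝ be differentiable with r'(s)² + m(r(s))²θ'(s)² = 1 and m(r(s))²θ'(s) = ν (constant). Write m = m(r(s)), and set |Ṗ(s)| = √(r'(s)² + m²(θ'(s) + μ)²), cos φ = r'(s), sin φ = m·θ'(s), cos ψ = r'(s)/|Ṗ(s)|, sin ψ = m·(θ'(s) + μ)/|Ṗ(s)| (the angles that the h-geodesic γ and the twisted F-geodesic P(s) = (r(s), θ(s) + μs) make with the meridian). Then for all s: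 |Ṗ(s)| = √(1 + 2μν + μ²m²) and √(1 + 2μν + μ²m²)·(cos ψ·cos φ + sin ψ·sin φ) = 1 + μν, i.e. √(1 + 2μν + μ²m²)·cos(ψ − φ) = 1 + μν. -/
/-- First Finslerian Clairaut relation on a rotational Randers surface of revolution:
`|Ṗ| = √(1 + 2μν + μ²m²)` and `√(1 + 2μν + μ²m²)·cos(ψ − φ) = 1 + μν`, where `φ` and
`ψ` are the angles the `h`-geodesic `γ` and the twisted `F`-geodesic `P` make with the
meridian. -/
theorem randers_first_clairaut_relation
    (m : ℝ → ℝ) (μ ν : ℝ) (hμ : 0 < μ)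
    (hm : ∀ x, 0 < m x ∧ m x < 1 / μ)
    (I : Set ℝ) (r θ r' θ' : ℝ → ℝ)
    (hr : ∀ s ∈ I, HasDerivAt r (r' s) s)
    (hθ : ∀ s ∈ I, HasDerivAt θ (θ' s) s)
    (hunit : ∀ s ∈ I, (r' s) ^ 2 + (m (r s)) ^ 2 * (θ' s) ^ 2 = 1)
    (hclair : ∀ s ∈ I, (m (r s)) ^ 2 * θ' s = ν) :
    ∀ s ∈ I,
      let nP := Real.sqrt ((r' s) ^ 2 + (m (r s)) ^ 2 * (θ' s + μ) ^ 2)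
      let cosφ := r' s
      let sinφ := m (r s) * θ' s
      let cosψ := r' s / nP
      let sinψ := m (r s) * (θ' s + μ) / nP
      nP = Real.sqrt (1 + 2 * μ * ν + μ ^ 2 * (m (r s)) ^ 2) ∧
      Real.sqrt (1 + 2 * μ * ν + μ ^ 2 * (m (r s)) ^ 2) * (cosψ * cosφ + sinψ * sinφ)
        = 1 + μ * ν := by
  intro s hs
  set M := m (r s) with hM
  have hMpos : 0 < M := (hm (r s)).1
  have hMlt : M < 1 / μ := (hm (r s)).2
  have hu := hunit s hs
  have hc := hclair s hs
  have key : (r' s) ^ 2 + M ^ 2 * (θ' s + μ) ^ 2 = 1 + 2 * μ * ν + μ ^ 2 * M ^ 2 := by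
    have : M ^ 2 * θ' s = ν := hc
    nlinarith [hu]
  have hpos : 0 < (r' s) ^ 2 + M ^ 2 * (θ' s + μ) ^ 2 := by
    rcases lt_or_eq_of_le (by positivity : (0:ℝ) ≤ (r' s) ^ 2 + M ^ 2 * (θ' s + μ) ^ 2) with h | h
    · exact h
    · exfalso
      have h1 : r' s = 0 := by nlinarith [sq_nonneg (r' s), sq_nonneg (M * (θ' s + μ))]
      have h2 : θ' s + μ = 0 := by
        have h2' : (θ' s + μ) ^ 2 = 0 := by nlinarith [sq_nonneg (θ' s + μ), mul_pos hMpos hMpos]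
        exact pow_eq_zero_iff (two_ne_zero) |>.mp h2' 
      have h3 : θ' s = -μ := by linarith
      have h4 : M ^ 2 * μ ^ 2 = 1 := by
        rw [h1, h3] at hu; nlinarith
      have h5 : M * μ < 1 := by
        calc M * μ < (1 / μ) * μ := by nlinarith
          _ = 1 := by field_simp
      nlinarith [mul_pos hMpos hμ]
  intro nP cosφ sinφ cosψ sinψ
  have hnP : nP = Real.sqrt (1 + 2 * μ * ν + μ ^ 2 * M ^ 2) := by
    rw [show nP = Real.sqrt ((r' s) ^ 2 + M ^ 2 * (θ' s + μ) ^ 2) from rfl, key]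
  refine ⟨hnP, ?_⟩
  have hnPpos : 0 < nP := by
    rw [show nP = Real.sqrt ((r' s) ^ 2 + M ^ 2 * (θ' s + μ) ^ 2) from rfl]
    exact Real.sqrt_pos.mpr hpos
  have hsq : nP ^ 2 = 1 + 2 * μ * ν + μ ^ 2 * M ^ 2 := by
    rw [show nP = Real.sqrt ((r' s) ^ 2 + M ^ 2 * (θ' s + μ) ^ 2) from rfl,
      Real.sq_sqrt hpos.le, key]
  rw [← hnP]
  have : cosψ * cosφ + sinψ * sinφ = (1 + μ * ν) / nP := by
    show r' s / nP * r' s + M * (θ' s + μ) / nP * (M * θ' s) = (1 + μ * ν) / nP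
    field_simp
    nlinarith [hu, hc]
  rw [this]
  field_simp
end

section
/- (Second Finslerian Clairaut relation.) Let m : ℝ → ℝ with 0 < m(x) < 1/μ for all x and μ > 0. Let r, θ : I → ℝ be differentiable with r'(s)² + m(r(s))²θ'(s)² = 1 and m(r(s))²θ'(s) = ν (constant). Write m = m(r(s)), |Ṗ(s)| = √(r'(s)² + m²(θ'(s) + μ)²), and sin ψ = m·(θ'(s) + μ)/|Ṗ(s)|. Then for all s: m·sin ψ = (ν + μm²)/√(1 + 2μν + μ²m²). -/
/-- Second Finslerian Clairaut relation on a rotational Randers surface of revolution: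
`m·sin ψ = (ν + μm²)/√(1 + 2μν + μ²m²)`, where `ψ` is the angle the twisted
`F`-geodesic `P(s) = (r s, θ s + μs)` makes with the meridian. -/
theorem randers_second_clairaut_relation
    (m : ℝ → ℝ) (μ ν : ℝ) (hμ : 0 < μ)
    (hm : ∀ x, 0 < m x ∧ m x < 1 / μ)
    (I : Set ℝ) (r θ r' θ' : ℝ → ℝ)
    (hr : ∀ s ∈ I, HasDerivAt r (r' s) s)
    (hθ : ∀ s ∈ I, HasDerivAt θ (θ' s) s)
    (hunit : ∀ s ∈ I, (r' s) ^ 2 + (m (r s)) ^ 2 * (θ' s) ^ 2 = 1)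
    (hclair : ∀ s ∈ I, (m (r s)) ^ 2 * θ' s = ν) :
    ∀ s ∈ I,
      let nP := Real.sqrt ((r' s) ^ 2 + (m (r s)) ^ 2 * (θ' s + μ) ^ 2)
      let sinψ := m (r s) * (θ' s + μ) / nP
      m (r s) * sinψ
        = (ν + μ * (m (r s)) ^ 2) / Real.sqrt (1 + 2 * μ * ν + μ ^ 2 * (m (r s)) ^ 2) := by
  intro s hs
  have h1 := hunit s hs
  have h2 := hclair s hs
  have harg : (r' s) ^ 2 + (m (r s)) ^ 2 * (θ' s + μ) ^ 2
      = 1 + 2 * μ * ν + μ ^ 2 * (m (r s)) ^ 2 := by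
    linear_combination h1 + 2 * μ * h2
  have hnum : m (r s) * (m (r s) * (θ' s + μ)) = ν + μ * (m (r s)) ^ 2 := by
    linear_combination h2
  simp only [harg]
  rw [mul_div_assoc', hnum]
end

section
/- (Meridians cannot be F-geodesics.) Let μ > 0 and let m : ℝ → ℝ be differentiable with m(x) > 0 and μ²m(x)² < 1 for all x. Let I be a nondegenerate interval and let r, θ : I → ℝ be twice differentiable, satisfying the geodesic equations r'' = m(r)m'(r)(θ')², θ'' = −2(m'(r)/m(r))r'θ', the unit-speed condition r'² + m(r)²(θ')² = 1, and θ'(s) = −μ for all s ∈ I. Then m'(r(s)) = 0 and r'(s)² = 1 − μ²m(r(s))² > 0 for all s ∈ I, r' is a nonzero constant, so r(I) is a nondegenerate interval on which m' vanishes identically; hence m is constant on a nondegenerate interval. In particular, if m is not constant on any nondegenerate interval, no such solution exists, i.e. no meridian (r(s), θ₀) of the surface of revolution is a geodesic of the rotational Randers metric. -/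
/-- Meridians cannot be `F`-geodesics: if an `h`-unit-speed geodesic of the warped
metric `h = dr² + m(r)²dθ²` satisfies `θ' ≡ -μ` on a nondegenerate interval `I` (so
that its twist is a meridian), then `m'` vanishes along `r`, `r'` is a nonzero
constant, and `m'` vanishes identically on the nondegenerate interval `r(I)`, forcing
`m` to be constant there. -/
theorem meridian_not_F_geodesic
    (μ : ℝ) (hμ : 0 < μ) (m m' : ℝ → ℝ)
    (hm : ∀ x, HasDerivAt m (m' x) x)
    (hmpos : ∀ x, 0 < m x) (hmb : ∀ x, μ ^ 2 * (m x) ^ 2 < 1)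
    (I : Set ℝ) (hI : Convex ℝ I) (hInd : ∃ a ∈ I, ∃ b ∈ I, a ≠ b)
    (r θ r' θ' r'' θ'' : ℝ → ℝ)
    (hr : ∀ s ∈ I, HasDerivAt r (r' s) s)
    (hr' : ∀ s ∈ I, HasDerivAt r' (r'' s) s)
    (hθ : ∀ s ∈ I, HasDerivAt θ (θ' s) s)
    (hθ' : ∀ s ∈ I, HasDerivAt θ' (θ'' s) s)
    (geo1 : ∀ s ∈ I, r'' s = m (r s) * m' (r s) * (θ' s) ^ 2)
    (geo2 : ∀ s ∈ I, θ'' s = -2 * (m' (r s) / m (r s)) * r' s * θ' s)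
    (hunit : ∀ s ∈ I, (r' s) ^ 2 + (m (r s)) ^ 2 * (θ' s) ^ 2 = 1)
    (hθμ : ∀ s ∈ I, θ' s = -μ) :
    (∀ s ∈ I, m' (r s) = 0) ∧
    (∀ s ∈ I, (r' s) ^ 2 = 1 - μ ^ 2 * (m (r s)) ^ 2 ∧ 0 < (r' s) ^ 2) ∧
    (∀ s ∈ I, ∀ t ∈ I, r' s = r' t) ∧
    (r '' I).OrdConnected ∧
    (∃ a ∈ r '' I, ∃ b ∈ r '' I, a ≠ b) ∧
    (∀ x ∈ r '' I, m' x = 0) ∧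
    (∀ x ∈ r '' I, ∀ y ∈ r '' I, m x = m y) := by
  obtain ⟨a, ha, b, hb, hab⟩ := hInd
  -- interior of I is nonempty
  have hint : (interior I).Nonempty := by
    rcases lt_or_gt_of_ne hab with h | h
    · have hsub : Set.Ioo a b ⊆ I := fun x hx =>
        hI.ordConnected.out ha hb ⟨hx.1.le, hx.2.le⟩
      exact ⟨(a + b) / 2, isOpen_Ioo.subset_interior_iff.2 hsub ⟨by linarith, by linarith⟩⟩
    · have hsub : Set.Ioo b a ⊆ I := fun x hx =>
        hI.ordConnected.out hb ha ⟨hx.1.le, hx.2.le⟩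
      exact ⟨(a + b) / 2, isOpen_Ioo.subset_interior_iff.2 hsub ⟨by linarith, by linarith⟩⟩
  have hud : UniqueDiffOn ℝ I := uniqueDiffOn_convex hI hint
  -- unit speed rewritten
  have hsq : ∀ s ∈ I, (r' s) ^ 2 = 1 - μ ^ 2 * (m (r s)) ^ 2 := by
    intro s hs
    have := hunit s hs
    rw [hθμ s hs] at this
    nlinarith [this]
  have hsqpos : ∀ s ∈ I, 0 < (r' s) ^ 2 := by
    intro s hs
    rw [hsq s hs]
    linarith [hmb (r s)]
  have hrne : ∀ s ∈ I, r' s ≠ 0 := by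
    intro s hs h
    have := hsqpos s hs
    rw [h] at this; simp at this
  -- θ'' = 0 on I
  have hθ''0 : ∀ s ∈ I, θ'' s = 0 := by
    intro s hs
    have h1 : HasDerivWithinAt θ' (θ'' s) I s := (hθ' s hs).hasDerivWithinAt
    have h2 : HasDerivWithinAt θ' 0 I s :=
      (hasDerivWithinAt_const s I (-μ)).congr (fun y hy => hθμ y hy) (hθμ s hs)
    exact (hud s hs).eq_deriv _ h1 h2
  -- m' vanishes along r
  have hm'0 : ∀ s ∈ I, m' (r s) = 0 := by
    intro s hs
    have h := geo2 s hs
    rw [hθ''0 s hs, hθμ s hs] at h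
    have hmne := (hmpos (r s)).ne'
    have hr's := hrne s hs
    field_simp at h
    rcases mul_eq_zero.1 (by linarith [h] : 2 * m' (r s) * r' s * μ = 0) with h | h
    · rcases mul_eq_zero.1 h with h | h
      · rcases mul_eq_zero.1 h with h | h
        · norm_num at h
        · exact h
      · exact absurd h hr's
    · exact absurd h hμ.ne'
  -- r'' = 0 on I
  have hr''0 : ∀ s ∈ I, r'' s = 0 := by
    intro s hs
    rw [geo1 s hs, hm'0 s hs]; ring
  -- r' constant
  have hr'const : ∀ s ∈ I, ∀ t ∈ I, r' s = r' t := by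
    intro s hs t ht
    have := hI.norm_image_sub_le_of_norm_hasDerivWithin_le
      (f := r') (f' := r'') (C := 0)
      (fun x hx => (hr' x hx).hasDerivWithinAt)
      (fun x hx => by rw [hr''0 x hx]; simp) ht hs
    have : ‖r' s - r' t‖ ≤ 0 := by simpa using this
    have := norm_nonneg (r' s - r' t)
    have h0 : ‖r' s - r' t‖ = 0 := le_antisymm ‹_› this
    rw [norm_eq_zero, sub_eq_zero] at h0
    exact h0
  -- r is affine on I: r s = r' a * s + (r a - r' a * a)
  have hraff : ∀ s ∈ I, r s = r' a * (s - a) + r a := by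
    intro s hs
    have key := hI.norm_image_sub_le_of_norm_hasDerivWithin_le
      (f := fun x => r x - r' a * x) (f' := fun x => r' x - r' a) (C := 0)
      (fun x hx => by
        have : HasDerivAt (fun x => r x - r' a * x) (r' x - r' a) x := by
          exact ((hr x hx).sub ((hasDerivAt_id x).const_mul (r' a))).congr_deriv (by simp)
        exact this.hasDerivWithinAt)
      (fun x hx => by show ‖r' x - r' a‖ ≤ 0; rw [hr'const x hx a ha]; simp) ha hs
    have : ‖(r s - r' a * s) - (r a - r' a * a)‖ ≤ 0 := by simpa using key
    have h0 : (r s - r' a * s) - (r a - r' a * a) = 0 := by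
      have := norm_nonneg ((r s - r' a * s) - (r a - r' a * a))
      rw [← norm_eq_zero]; linarith
    linarith [h0]
  -- continuity of r on I
  have hrcont : ContinuousOn r I := fun s hs => ((hr s hs).continuousAt).continuousWithinAt
  have hordconn : (r '' I).OrdConnected := by
    have hpre : IsPreconnected (r '' I) := (hI.isPreconnected).image r hrcont
    exact hpre.ordConnected
  have hconv : Convex ℝ (r '' I) := convex_iff_ordConnected.2 hordconn
  have hne : r a ≠ r b := by
    rw [hraff a ha, hraff b hb]
    intro h
    have : r' a * (a - b) = 0 := by linarith
    rcases mul_eq_zero.1 this with h | h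
    · exact hrne a ha h
    · exact hab (by linarith)
  refine ⟨hm'0, fun s hs => ⟨hsq s hs, hsqpos s hs⟩, hr'const, hordconn,
    ⟨r a, ⟨a, ha, rfl⟩, r b, ⟨b, hb, rfl⟩, hne⟩, ?_, ?_⟩
  · rintro x ⟨s, hs, rfl⟩
    exact hm'0 s hs
  · -- m constant on r '' I since m' = 0 there
    intro x hx y hy
    have key := hconv.norm_image_sub_le_of_norm_hasDerivWithin_le
      (f := m) (f' := m') (C := 0)
      (fun z hz => (hm z).hasDerivWithinAt)
      (fun z hz => by obtain ⟨s, hs, rfl⟩ := hz; rw [hm'0 s hs]; simp) hy hx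
    have h0 : ‖m x - m y‖ ≤ 0 := by simpa using key
    have := norm_nonneg (m x - m y)
    have : ‖m x - m y‖ = 0 := le_antisymm h0 this
    rw [norm_eq_zero, sub_eq_zero] at this
    exact this
end

section
/- Let m : ℝ → ℝ be continuous and let r, θ : [a, b] → ℝ be differentiable with r'(s)² + m(r(s))²θ'(s)² = 1 and m(r(s))²θ'(s) = ν ≠ 0 for all s, with m(r(s)) > |ν| for all s, and suppose r'(s) has constant sign ε ∈ {−1, +1} on [a, b). Then b − a = ε·∫_{r(a)}^{r(b)} m(t)/√(m(t)² − ν²) dt, θ(b) − θ(a) = ε·∫_{r(a)}^{r(b)} (ν/m(t))·(1/√(m(t)² − ν²)) dt, and consequently the twisted geodesic P(s) = (r(s), θ(s) + μs) satisfies P²(b) − P²(a) = ε·∫_{r(a)}^{r(b)} [ξ(t, ν) + μ·η(t, ν)] dt, where ξ(t, ν) = (ν/m(t))·(1/√(m(t)² − ν²)) and η(t, ν) = m(t)/√(m(t)² − ν²). -/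
/-- Explicit integral formulas for a geodesic segment of the rotational Randers
surface of revolution: if `r'` has constant sign `ε` on `[a, b)`, then
`b - a = ε∫ η`, `θ(b) - θ(a) = ε∫ ξ`, and the twisted geodesic
`P²(s) = θ(s) + μs` satisfies `P²(b) - P²(a) = ε∫ (ξ + μη)`, where
`ξ(t, ν) = (ν/m(t))/√(m(t)² - ν²)` and `η(t, ν) = m(t)/√(m(t)² - ν²)`. -/
theorem randers_geodesic_integral_formulas
    (m : ℝ → ℝ) (hmcont : Continuous m) (μ ν : ℝ) (hν : ν ≠ 0)
    (a b : ℝ) (hab : a ≤ b) (r θ r' θ' : ℝ → ℝ)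
    (hr : ∀ s ∈ Set.Icc a b, HasDerivAt r (r' s) s)
    (hθ : ∀ s ∈ Set.Icc a b, HasDerivAt θ (θ' s) s)
    (hunit : ∀ s ∈ Set.Icc a b, (r' s) ^ 2 + (m (r s)) ^ 2 * (θ' s) ^ 2 = 1)
    (hclair : ∀ s ∈ Set.Icc a b, (m (r s)) ^ 2 * θ' s = ν)
    (hmν : ∀ s ∈ Set.Icc a b, |ν| < m (r s))
    (ε : ℝ) (hε : ε = 1 ∨ ε = -1)
    (hsign : ∀ s ∈ Set.Ico a b, 0 < ε * r' s) :
    b - a = ε * ∫ t in (r a)..(r b), m t / Real.sqrt ((m t) ^ 2 - ν ^ 2) ∧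
    θ b - θ a = ε * ∫ t in (r a)..(r b), (ν / m t) * (1 / Real.sqrt ((m t) ^ 2 - ν ^ 2)) ∧
    (θ b + μ * b) - (θ a + μ * a)
      = ε * ∫ t in (r a)..(r b),
          ((ν / m t) * (1 / Real.sqrt ((m t) ^ 2 - ν ^ 2))
            + μ * (m t / Real.sqrt ((m t) ^ 2 - ν ^ 2))) := by
  have hε2 : ε ^ 2 = 1 := by rcases hε with h | h <;> simp [h]
  have hεne : ε ≠ 0 := by rcases hε with h | h <;> simp [h]
  rcases eq_or_lt_of_le hab with rfl | hlt
  · simp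
  have huIcc : Set.uIcc a b = Set.Icc a b := Set.uIcc_of_le hab
  -- basic pointwise facts
  have hmpos : ∀ s ∈ Set.Icc a b, 0 < m (r s) := fun s hs =>
    lt_of_le_of_lt (abs_nonneg ν) (hmν s hs)
  have hQpos : ∀ s ∈ Set.Icc a b, 0 < m (r s) ^ 2 - ν ^ 2 := by
    intro s hs
    have h1 := hmν s hs
    have h2 : |ν| ^ 2 = ν ^ 2 := sq_abs ν
    nlinarith [abs_nonneg ν]
  have hθ'eq : ∀ s ∈ Set.Icc a b, θ' s = ν / m (r s) ^ 2 := by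
    intro s hs
    have h := hclair s hs
    have hm := (hmpos s hs).ne'
    field_simp
    linarith
  have hr'sq : ∀ s ∈ Set.Icc a b, (r' s) ^ 2 = (m (r s) ^ 2 - ν ^ 2) / m (r s) ^ 2 := by
    intro s hs
    have h1 := hunit s hs
    have hm := (hmpos s hs).ne'
    have h3 : m (r s) ^ 2 * θ' s ^ 2 = ν ^ 2 / m (r s) ^ 2 := by
      rw [hθ'eq s hs]; field_simp
    rw [h3] at h1
    field_simp
    field_simp at h1
    linarith
  have hr'ne : ∀ s ∈ Set.Icc a b, r' s ≠ 0 := by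
    intro s hs h
    have h2 := hr'sq s hs
    rw [h] at h2
    have h4 := hQpos s hs
    have hm := hmpos s hs
    have h5 : (0:ℝ) < (m (r s) ^ 2 - ν ^ 2) / m (r s) ^ 2 := by positivity
    rw [← h2] at h5
    simp at h5
  -- sign at b
  have hrc : ContinuousOn r (Set.Icc a b) := fun s hs =>
    ((hr s hs).continuousAt).continuousWithinAt
  have hmono : StrictMonoOn (fun s => ε * r s) (Set.Icc a b) := by
    apply strictMonoOn_of_deriv_pos (convex_Icc a b)
    · exact continuousOn_const.mul hrc
    · intro x hx
      rw [interior_Icc] at hx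
      have hx' : x ∈ Set.Icc a b := Set.mem_Icc_of_Ioo hx
      rw [((hr x hx').const_mul ε).deriv]
      exact hsign x ⟨le_of_lt hx.1, hx.2⟩
  have hsignb : 0 < ε * r' b := by
    have hb : b ∈ Set.Icc a b := ⟨hab, le_refl b⟩
    have hd : HasDerivWithinAt (fun s => ε * r s) (ε * r' b) (Set.Icc a b) b :=
      ((hr b hb).const_mul ε).hasDerivWithinAt
    rw [hasDerivWithinAt_iff_tendsto_slope] at hd
    have hne : (nhdsWithin b (Set.Icc a b \ {b})).NeBot := by
      rw [Set.Icc_sdiff_right]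
      exact right_nhdsWithin_Ico_neBot hlt
    have hge : 0 ≤ ε * r' b := by
      haveI := hne
      refine ge_of_tendsto hd ?_
      filter_upwards [self_mem_nhdsWithin] with x hx
      rw [Set.Icc_sdiff_right] at hx
      have hxb : x < b := hx.2
      have hle : ε * r x ≤ ε * r b :=
        le_of_lt (hmono ⟨hx.1, le_of_lt hxb⟩ ⟨hab, le_refl b⟩ hxb)
      have hsl : slope (fun s => ε * r s) b x = (ε * r x - ε * r b) / (x - b) := by
        rw [slope_def_field]
      rw [hsl, div_nonneg_iff]
      right
      constructor <;> linarith
    exact lt_of_le_of_ne hge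
      (Ne.symm (mul_ne_zero hεne (hr'ne b ⟨hab, le_refl b⟩)))
  have hsign' : ∀ s ∈ Set.Icc a b, 0 < ε * r' s := by
    intro s hs
    rcases eq_or_lt_of_le hs.2 with rfl | h
    · exact hsignb
    · exact hsign s ⟨hs.1, h⟩
  -- explicit formula for r'
  have hr'eq : ∀ s ∈ Set.Icc a b,
      r' s = ε * (Real.sqrt (m (r s) ^ 2 - ν ^ 2) / m (r s)) := by
    intro s hs
    have hm := hmpos s hs
    have h1 : (ε * r' s) ^ 2 = (m (r s) ^ 2 - ν ^ 2) / m (r s) ^ 2 := by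
      rw [mul_pow, hε2, one_mul]; exact hr'sq s hs
    have h2 : ε * r' s = Real.sqrt ((m (r s) ^ 2 - ν ^ 2) / m (r s) ^ 2) := by
      rw [← h1, Real.sqrt_sq (le_of_lt (hsign' s hs))]
    rw [Real.sqrt_div (le_of_lt (hQpos s hs)), Real.sqrt_sq hm.le] at h2
    have : ε * (ε * r' s) = ε * (Real.sqrt (m (r s) ^ 2 - ν ^ 2) / m (r s)) := by
      rw [h2]
    calc r' s = ε * (ε * r' s) := by rw [← mul_assoc, ← sq, hε2, one_mul]
      _ = _ := this
  -- continuity of r'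
  have hsqc : ContinuousOn (fun s => Real.sqrt (m (r s) ^ 2 - ν ^ 2)) (Set.Icc a b) :=
    Real.continuous_sqrt.comp_continuousOn
      (((hmcont.comp_continuousOn hrc).pow 2).sub continuousOn_const)
  have hr'c : ContinuousOn r' (Set.Icc a b) := by
    refine ContinuousOn.congr ?_ hr'eq
    exact continuousOn_const.mul
      (hsqc.div (hmcont.comp_continuousOn hrc) (fun s hs => (hmpos s hs).ne'))
  -- facts on the image
  have himg : ∀ t ∈ r '' Set.Icc a b, |ν| < m t := by
    rintro t ⟨s, hs, rfl⟩; exact hmν s hs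
  have himgQ : ∀ t ∈ r '' Set.Icc a b, 0 < m t ^ 2 - ν ^ 2 := by
    intro t ht
    have h1 := himg t ht
    have h2 : |ν| ^ 2 = ν ^ 2 := sq_abs ν
    nlinarith [abs_nonneg ν]
  have himgm : ∀ t ∈ r '' Set.Icc a b, 0 < m t := fun t ht =>
    lt_of_le_of_lt (abs_nonneg ν) (himg t ht)
  have hsqimg : ContinuousOn (fun t => Real.sqrt (m t ^ 2 - ν ^ 2)) (r '' Set.Icc a b) :=
    Real.continuous_sqrt.comp_continuousOn
      ((hmcont.continuousOn.pow 2).sub continuousOn_const)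
  have hηc : ContinuousOn (fun t => m t / Real.sqrt (m t ^ 2 - ν ^ 2)) (r '' Set.Icc a b) :=
    hmcont.continuousOn.div hsqimg
      (fun t ht => (Real.sqrt_pos.mpr (himgQ t ht)).ne')
  have hξc : ContinuousOn (fun t => (ν / m t) * (1 / Real.sqrt (m t ^ 2 - ν ^ 2)))
      (r '' Set.Icc a b) :=
    (continuousOn_const.div hmcont.continuousOn (fun t ht => (himgm t ht).ne')).mul
      (continuousOn_const.div hsqimg (fun t ht => (Real.sqrt_pos.mpr (himgQ t ht)).ne'))
  -- change of variables for η
  have hη : (∫ t in (r a)..(r b), m t / Real.sqrt (m t ^ 2 - ν ^ 2)) = ε * (b - a) := by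
    rw [← intervalIntegral.integral_comp_smul_deriv' (f := r) (f' := r')
      (fun x hx => hr x (huIcc ▸ hx)) (huIcc ▸ hr'c) (by rw [huIcc]; exact hηc)]
    have : ∀ x ∈ Set.uIcc a b,
        r' x • ((fun t => m t / Real.sqrt (m t ^ 2 - ν ^ 2)) ∘ r) x = ε := by
      intro x hx
      rw [huIcc] at hx
      have hm := hmpos x hx
      have hQ := hQpos x hx
      have hsq : Real.sqrt (m (r x) ^ 2 - ν ^ 2) ≠ 0 := (Real.sqrt_pos.mpr hQ).ne'
      simp only [Function.comp_apply, smul_eq_mul, hr'eq x hx]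
      field_simp
    rw [intervalIntegral.integral_congr this]
    simp [mul_comm]
  -- change of variables for ξ
  have hθ'c : ContinuousOn θ' (Set.Icc a b) := by
    refine ContinuousOn.congr ?_ hθ'eq
    exact continuousOn_const.div ((hmcont.comp_continuousOn hrc).pow 2)
      (fun s hs => pow_ne_zero 2 (hmpos s hs).ne')
  have hξ : (∫ t in (r a)..(r b), (ν / m t) * (1 / Real.sqrt (m t ^ 2 - ν ^ 2)))
      = ε * (θ b - θ a) := by
    rw [← intervalIntegral.integral_comp_smul_deriv' (f := r) (f' := r')
      (fun x hx => hr x (huIcc ▸ hx)) (huIcc ▸ hr'c) (by rw [huIcc]; exact hξc)]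
    have heq : ∀ x ∈ Set.uIcc a b,
        r' x • ((fun t => (ν / m t) * (1 / Real.sqrt (m t ^ 2 - ν ^ 2))) ∘ r) x
          = ε * θ' x := by
      intro x hx
      rw [huIcc] at hx
      have hm := hmpos x hx
      have hQ := hQpos x hx
      have hsq : Real.sqrt (m (r x) ^ 2 - ν ^ 2) ≠ 0 := (Real.sqrt_pos.mpr hQ).ne'
      simp only [Function.comp_apply, smul_eq_mul, hr'eq x hx, hθ'eq x hx]
      field_simp
    rw [intervalIntegral.integral_congr heq]
    have : (∫ x in a..b, ε * θ' x) = ε * θ b - ε * θ a := by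
      apply intervalIntegral.integral_eq_sub_of_hasDerivAt
      · intro x hx
        rw [huIcc] at hx
        exact (hθ x hx).const_mul ε
      · apply ContinuousOn.intervalIntegrable
        rw [huIcc]
        exact continuousOn_const.mul hθ'c
    rw [this]; ring
  -- integrability on [[r a, r b]]
  have hsubset : Set.uIcc (r a) (r b) ⊆ r '' Set.Icc a b := by
    have := intermediate_value_uIcc (f := r) (by rw [huIcc]; exact hrc)
    rwa [huIcc] at this
  have hηint : IntervalIntegrable (fun t => m t / Real.sqrt (m t ^ 2 - ν ^ 2))
      MeasureTheory.volume (r a) (r b) :=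
    (hηc.mono hsubset).intervalIntegrable
  have hξint : IntervalIntegrable (fun t => (ν / m t) * (1 / Real.sqrt (m t ^ 2 - ν ^ 2)))
      MeasureTheory.volume (r a) (r b) :=
    (hξc.mono hsubset).intervalIntegrable
  refine ⟨by rw [hη]; linear_combination (a - b) * hε2,
    by rw [hξ]; linear_combination (θ a - θ b) * hε2, ?_⟩
  have hsplit : (∫ t in (r a)..(r b),
      ((ν / m t) * (1 / Real.sqrt ((m t) ^ 2 - ν ^ 2))
        + μ * (m t / Real.sqrt ((m t) ^ 2 - ν ^ 2))))
      = (∫ t in (r a)..(r b), (ν / m t) * (1 / Real.sqrt ((m t) ^ 2 - ν ^ 2)))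
        + μ * ∫ t in (r a)..(r b), m t / Real.sqrt ((m t) ^ 2 - ν ^ 2) := by
    rw [intervalIntegral.integral_add hξint (hηint.const_mul μ),
      intervalIntegral.integral_const_mul]
  rw [hsplit, hη, hξ]
  linear_combination (θ a - θ b + μ * (a - b)) * hε2
end
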